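/- For every μ with 1/2 < μ < 1, the commuter h_μ is discontinuous at x = 1/2; in fact it has a jump discontinuity there: the left-hand limit of h_μ at 1/2 is strictly less than the right-hand limit of h_μ at 1/2. -/

import Mathlib

open Set Filter Topology

/-- `h : [0,1] → [0,1]` satisfies the commuter functional equation for `T_μ`:
`h(x) = (1/2)·h(2μx)` for `0 ≤ x ≤ 1/2` and `h(x) = 1 - (1/2)·h(2μ(1-x))` for `1/2 < x ≤ 1`. -/
def IsCommuter (μ : ℝ) (h : ℝ → ℝ) : Prop :=
  (∀ x ∈ Icc (0:ℝ) 1, h x ∈ Icc (0:ℝ) 1) ∧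
  (∀ x : ℝ, 0 ≤ x → x ≤ 1/2 → h x = (1/2) * h (2*μ*x)) ∧
  (∀ x : ℝ, 1/2 < x → x ≤ 1 → h x = 1 - (1/2) * h (2*μ*(1-x)))

/-- Oscillation smallness of `f` along a filter. -/
def SmallOsc (f : ℝ → ℝ) (F : Filter ℝ) (δ : ℝ) : Prop :=
  ∃ s ∈ F, ∀ x ∈ s, ∀ y ∈ s, |f x - f y| ≤ δ

lemma smallOsc_step {h φ : ℝ → ℝ} {F G : Filter ℝ} {c e δ δ' : ℝ}
    (heq : ∀ᶠ x in F, h x = c + e * h (φ x)) (hφ : Tendsto φ F G)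
    (hG : SmallOsc h G δ) (hδ : |e| * δ ≤ δ') : SmallOsc h F δ' := by
  obtain ⟨t, htG, ht⟩ := hG
  refine ⟨{x | h x = c + e * h (φ x)} ∩ φ ⁻¹' t, inter_mem heq (hφ htG), ?_⟩
  rintro x ⟨hx1, hx2⟩ y ⟨hy1, hy2⟩
  have hxy : h x - h y = e * (h (φ x) - h (φ y)) := by
    simp only [Set.mem_setOf_eq] at hx1 hy1
    rw [hx1, hy1]; ring
  rw [hxy, abs_mul]
  exact le_trans (mul_le_mul_of_nonneg_left (ht _ hx2 _ hy2) (abs_nonneg e)) hδ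

lemma tendsto_side {φ : ℝ → ℝ} (hφ : Continuous φ) {s t : Set ℝ} (hst : Set.MapsTo φ s t)
    {p q : ℝ} (hpq : φ p = q) : Tendsto φ (𝓝[s] p) (𝓝[t] q) :=
  hpq ▸ hφ.continuousWithinAt.tendsto_nhdsWithin hst

lemma smallOsc_all {μ : ℝ} {h : ℝ → ℝ} (hμ1 : 1/2 < μ) (hμ2 : μ < 1) (hcm : IsCommuter μ h) :
    ∀ n : ℕ, ∀ q : ℝ, 0 < q → q < 1 →
      SmallOsc h (𝓝[<] q) ((1/2)^n) ∧ SmallOsc h (𝓝[>] q) ((1/2)^n) := by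
  have h2μ : (1:ℝ) < 2*μ := by linarith
  have habs : |(1/2 : ℝ)| = 1/2 := by norm_num
  have habs' : |(-(1/2) : ℝ)| = 1/2 := by norm_num
  have hpow : ∀ n : ℕ, (1/2 : ℝ) * (1/2)^n ≤ (1/2)^(n+1) := by
    intro n; rw [pow_succ]; ring_nf; exact le_refl _
  intro n
  induction n with
  | zero =>
    intro q hq0 hq1
    have hbd : ∀ x ∈ Ioo (0:ℝ) 1, ∀ y ∈ Ioo (0:ℝ) 1, |h x - h y| ≤ (1/2:ℝ)^0 := by
      intro x hx y hy
      have h1 := hcm.1 x ⟨hx.1.le, hx.2.le⟩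
      have h2 := hcm.1 y ⟨hy.1.le, hy.2.le⟩
      rw [abs_sub_le_iff]
      constructor <;> · simp only [pow_zero]; linarith [h1.1, h1.2, h2.1, h2.2]
    constructor
    · refine ⟨Ioo 0 q, Ioo_mem_nhdsLT_of_mem ⟨hq0, le_refl q⟩, ?_⟩
      intro x hx y hy
      exact hbd x ⟨hx.1, lt_trans hx.2 hq1⟩ y ⟨hy.1, lt_trans hy.2 hq1⟩
    · refine ⟨Ioo q 1, Ioo_mem_nhdsGT_of_mem ⟨le_refl q, hq1⟩, ?_⟩
      intro x hx y hy
      exact hbd x ⟨lt_trans hq0 hx.1, hx.2⟩ y ⟨lt_trans hq0 hy.1, hy.2⟩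
  | succ n ih =>
    intro q hq0 hq1
    constructor
    · -- left side
      rcases le_or_gt q (1/2) with hq | hq
      · -- left branch : h x = (1/2) h (2μx)
        have heq : ∀ᶠ x in 𝓝[<] q, h x = 0 + (1/2) * h (2*μ*x) := by
          filter_upwards [Ioo_mem_nhdsLT_of_mem (⟨hq0, le_refl q⟩ : q ∈ Ioc 0 q)] with x hx
          rw [hcm.2.1 x hx.1.le (le_trans hx.2.le hq)]; ring
        have hφ : Tendsto (fun x => 2*μ*x) (𝓝[<] q) (𝓝[<] (2*μ*q)) :=
          tendsto_side (continuous_const.mul continuous_id)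
            (fun x hx => by
              simp only [mem_Iio, id_eq] at hx ⊢
              exact mul_lt_mul_of_pos_left hx (by linarith)) rfl
        have hnew0 : 0 < 2*μ*q := by nlinarith
        have hnew1 : 2*μ*q < 1 := by nlinarith
        exact smallOsc_step heq hφ (ih (2*μ*q) hnew0 hnew1).1 (by rw [habs]; exact hpow n)
      · -- right branch : h x = 1 - (1/2) h (2μ(1-x))
        have heq : ∀ᶠ x in 𝓝[<] q, h x = 1 + (-(1/2)) * h (2*μ*(1-x)) := by
          filter_upwards [Ioo_mem_nhdsLT_of_mem (⟨hq, le_refl q⟩ : q ∈ Ioc (1/2) q)] with x hx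
          rw [hcm.2.2 x hx.1 (le_of_lt (lt_trans hx.2 hq1))]; ring
        have hφ : Tendsto (fun x => 2*μ*(1-x)) (𝓝[<] q) (𝓝[>] (2*μ*(1-q))) :=
          tendsto_side (continuous_const.mul (continuous_const.sub continuous_id))
            (fun x hx => by
              simp only [mem_Iio, id_eq] at hx
              simp only [mem_Ioi, id_eq, Pi.mul_apply, Pi.sub_apply]
              nlinarith) rfl
        have hnew0 : 0 < 2*μ*(1-q) := by nlinarith
        have hnew1 : 2*μ*(1-q) < 1 := by nlinarith
        exact smallOsc_step heq hφ (ih _ hnew0 hnew1).2 (by rw [habs']; exact hpow n)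
    · -- right side
      rcases lt_or_ge q (1/2) with hq | hq
      · have heq : ∀ᶠ x in 𝓝[>] q, h x = 0 + (1/2) * h (2*μ*x) := by
          filter_upwards [Ioo_mem_nhdsGT_of_mem (⟨le_refl q, hq⟩ : q ∈ Ico q (1/2))] with x hx
          rw [hcm.2.1 x (le_of_lt (lt_trans hq0 hx.1)) hx.2.le]; ring
        have hφ : Tendsto (fun x => 2*μ*x) (𝓝[>] q) (𝓝[>] (2*μ*q)) :=
          tendsto_side (continuous_const.mul continuous_id)
            (fun x hx => by
              simp only [mem_Ioi, id_eq] at hx ⊢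
              exact mul_lt_mul_of_pos_left hx (by linarith)) rfl
        have hnew0 : 0 < 2*μ*q := by nlinarith
        have hnew1 : 2*μ*q < 1 := by nlinarith
        exact smallOsc_step heq hφ (ih _ hnew0 hnew1).2 (by rw [habs]; exact hpow n)
      · have heq : ∀ᶠ x in 𝓝[>] q, h x = 1 + (-(1/2)) * h (2*μ*(1-x)) := by
          filter_upwards [Ioo_mem_nhdsGT_of_mem (⟨le_refl q, hq1⟩ : q ∈ Ico q 1)] with x hx
          rw [hcm.2.2 x (lt_of_le_of_lt hq hx.1) hx.2.le]; ring
        have hφ : Tendsto (fun x => 2*μ*(1-x)) (𝓝[>] q) (𝓝[<] (2*μ*(1-q))) :=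
          tendsto_side (continuous_const.mul (continuous_const.sub continuous_id))
            (fun x hx => by
              simp only [mem_Ioi, id_eq] at hx
              simp only [mem_Iio, id_eq, Pi.mul_apply, Pi.sub_apply]
              nlinarith) rfl
        have hnew0 : 0 < 2*μ*(1-q) := by nlinarith
        have hnew1 : 2*μ*(1-q) < 1 := by nlinarith
        exact smallOsc_step heq hφ (ih _ hnew0 hnew1).1 (by rw [habs']; exact hpow n)

lemma commuter_unfold {μ : ℝ} {h : ℝ → ℝ} (hμ0 : 0 ≤ μ) (hcm : IsCommuter μ h) :
    ∀ k : ℕ, ∀ z : ℝ, 0 ≤ z → (∀ j < k, (2*μ)^j * z ≤ 1/2) →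
      h z = (1/2)^k * h ((2*μ)^k * z) := by
  intro k
  induction k with
  | zero => intro z _ _; simp
  | succ n ih =>
    intro z hz0 hzj
    have h0 : z ≤ 1/2 := by
      have := hzj 0 (Nat.succ_pos n); simpa using this
    have h2μ : 0 ≤ 2*μ := by linarith
    rw [hcm.2.1 z hz0 h0]
    rw [ih (2*μ*z) (by positivity) ?_]
    · have harg : (2*μ)^n * (2*μ*z) = (2*μ)^(n+1) * z := by rw [pow_succ]; ring
      rw [harg, pow_succ]; ring
    · intro j hj
      have : (2*μ)^j * (2*μ*z) = (2*μ)^(j+1) * z := by rw [pow_succ]; ring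
      rw [this]
      exact hzj (j+1) (by omega)

/-- For `1/2 < μ < 1`, the commuter `h_μ` is discontinuous at `1/2`; in fact it has a jump
discontinuity there: the left-hand limit (along the domain `[0,1]`) is strictly less than
the right-hand limit. -/
theorem commuter_jump_at_half (μ : ℝ) (hμ1 : 1/2 < μ) (hμ2 : μ < 1)
    (h : ℝ → ℝ) (hc : IsCommuter μ h) :
    ¬ ContinuousWithinAt h (Icc (0:ℝ) 1) (1/2) ∧
    ∃ a b : ℝ,
      Tendsto h (nhdsWithin (1/2 : ℝ) (Ico (0:ℝ) (1/2))) (nhds a) ∧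
      Tendsto h (nhdsWithin (1/2 : ℝ) (Ioc (1/2 : ℝ) 1)) (nhds b) ∧
      a < b := by
  have h2μ : (1:ℝ) < 2*μ := by linarith
  set c : ℝ := 2*μ*(1-μ) with hcdef
  have hc0 : 0 < c := by rw [hcdef]; nlinarith
  have hch : c < 1/2 := by rw [hcdef]; nlinarith [mul_pos (by linarith : (0:ℝ) < 2*μ-1) (by linarith : (0:ℝ) < 2*μ-1)]
  have hc1 : c < 1 := lt_trans hch (by norm_num)
  -- existence of the right limit M of h at c
  have hcauchy : Cauchy (map h (𝓝[>] c)) := by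
    rw [Metric.cauchy_iff]
    refine ⟨Filter.map_neBot, ?_⟩
    intro ε hε
    obtain ⟨n, hn⟩ := exists_pow_lt_of_lt_one hε (by norm_num : (1/2:ℝ) < 1)
    obtain ⟨s, hsF, hs⟩ := (smallOsc_all hμ1 hμ2 hc n c hc0 hc1).2
    refine ⟨h '' s, image_mem_map hsF, ?_⟩
    rintro x ⟨x', hx', rfl⟩ y ⟨y', hy', rfl⟩
    calc dist (h x') (h y') = |h x' - h y'| := Real.dist_eq _ _
      _ ≤ (1/2)^n := hs _ hx' _ hy'
      _ < ε := hn
  obtain ⟨M, hM⟩ : ∃ M, Tendsto h (𝓝[>] c) (𝓝 M) := CompleteSpace.complete hcauchy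
  -- M is strictly positive
  have hNex : ∃ n : ℕ, 1/2 ≤ (2*μ)^n * c := by
    obtain ⟨n, hn⟩ := ((tendsto_pow_atTop_atTop_of_one_lt h2μ).eventually_ge_atTop ((1/2)/c)).exists
    exact ⟨n, by rw [div_le_iff₀ hc0] at hn; linarith⟩
  set N := Nat.find hNex with hNdef
  have hNspec : 1/2 ≤ (2*μ)^N * c := Nat.find_spec hNex
  have hN0 : N ≠ 0 := by
    intro h0
    rw [h0] at hNspec; simp at hNspec; linarith
  have hNpred : N - 1 < N := Nat.pred_lt hN0
  have hβ : (2*μ)^(N-1) * c < 1/2 := lt_of_not_ge (Nat.find_min hNex hNpred)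
  have hβpos : (0:ℝ) < (2*μ)^(N-1) := pow_pos (by linarith) _
  have hlow : ∀ᶠ z in 𝓝[>] c, (1/2:ℝ)^(N+1) ≤ h z := by
    have hmem : Ioo c ((1/2) / (2*μ)^(N-1)) ∈ 𝓝[>] c := by
      refine Ioo_mem_nhdsGT_of_mem ⟨le_refl c, ?_⟩
      rw [lt_div_iff₀ hβpos]; linarith [hβ]
    filter_upwards [hmem] with z hz
    have hz0 : 0 < z := lt_trans hc0 hz.1
    have hzβ : (2*μ)^(N-1) * z < 1/2 := by
      have := (lt_div_iff₀ hβpos).1 hz.2; linarith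
    have hall : ∀ j < N, (2*μ)^j * z ≤ 1/2 := by
      intro j hj
      have hle : (2*μ)^j ≤ (2*μ)^(N-1) :=
        pow_le_pow_right₀ (by linarith) (by omega)
      have := mul_le_mul_of_nonneg_right hle hz0.le
      linarith
    have hzformula := commuter_unfold (by linarith) hc N z hz0.le hall
    set w : ℝ := (2*μ)^N * z with hwdef
    have hNsucc : N = (N-1) + 1 := (Nat.succ_pred_eq_of_pos (Nat.pos_of_ne_zero hN0)).symm
    have hpowsplit : (2*μ)^N = (2*μ)^(N-1) * (2*μ) := by
      conv_lhs => rw [hNsucc]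
      rw [pow_succ]
    have hwsplit : w = 2*μ * ((2*μ)^(N-1) * z) := by
      rw [hwdef, hpowsplit]; ring
    have hw12 : 1/2 < w := by
      have : (2*μ)^N * c < (2*μ)^N * z :=
        mul_lt_mul_of_pos_left hz.1 (pow_pos (by linarith) _)
      rw [hwdef]; linarith
    have hw1 : w < 1 := by rw [hwsplit]; nlinarith
    have hwlow : (1/2:ℝ) ≤ h w := by
      rw [hc.2.2 w hw12 hw1.le]
      have harg : 2*μ*(1-w) ∈ Icc (0:ℝ) 1 := by
        constructor
        · nlinarith
        · nlinarith
      have := (hc.1 _ harg).2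
      linarith
    rw [hzformula]
    calc (1/2:ℝ)^(N+1) = (1/2)^N * (1/2) := by rw [pow_succ]
      _ ≤ (1/2)^N * h w := by
          exact mul_le_mul_of_nonneg_left hwlow (by positivity)
  have hMpos : 0 < M := by
    have : (1/2:ℝ)^(N+1) ≤ M := ge_of_tendsto hM hlow
    have : (0:ℝ) < (1/2:ℝ)^(N+1) := by positivity
    linarith [ge_of_tendsto hM hlow]
  -- left limit of h at μ is L = 1 - M/2
  have hφμ : Tendsto (fun x => 2*μ*(1-x)) (𝓝[<] μ) (𝓝[>] c) := by
    refine tendsto_side (continuous_const.mul (continuous_const.sub continuous_id)) ?_ (by simp only [id_eq, hcdef, Pi.mul_apply, Pi.sub_apply])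
    intro x hx
    simp only [mem_Iio, id_eq] at hx
    simp only [mem_Ioi, id_eq, hcdef, Pi.mul_apply, Pi.sub_apply]
    nlinarith
  have hL : Tendsto h (𝓝[<] μ) (𝓝 (1 - (1/2) * M)) := by
    have h1 : Tendsto (fun x => 1 - (1/2) * h (2*μ*(1-x))) (𝓝[<] μ) (𝓝 (1 - (1/2)*M)) :=
      tendsto_const_nhds.sub (tendsto_const_nhds.mul (hM.comp hφμ))
    refine h1.congr' ?_
    filter_upwards [Ioo_mem_nhdsLT_of_mem (⟨hμ1, le_refl μ⟩ : μ ∈ Ioc (1/2) μ)] with x hx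
    exact (hc.2.2 x hx.1 (le_of_lt (lt_trans hx.2 hμ2))).symm
  set L : ℝ := 1 - (1/2)*M with hLdef
  -- the two one-sided limits at 1/2
  have ha' : Tendsto h (𝓝[<] (1/2:ℝ)) (𝓝 ((1/2)*L)) := by
    have hφ : Tendsto (fun x => 2*μ*x) (𝓝[<] (1/2:ℝ)) (𝓝[<] μ) := by
      refine tendsto_side (continuous_const.mul continuous_id) ?_ (by simp only [id_eq, Pi.mul_apply]; ring)
      intro x hx
      simp only [mem_Iio, id_eq, Pi.mul_apply] at hx ⊢
      nlinarith
    have h1 : Tendsto (fun x => (1/2) * h (2*μ*x)) (𝓝[<] (1/2:ℝ)) (𝓝 ((1/2)*L)) :=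
      tendsto_const_nhds.mul (hL.comp hφ)
    refine h1.congr' ?_
    filter_upwards [Ioo_mem_nhdsLT_of_mem (⟨by norm_num, le_refl _⟩ : (1/2:ℝ) ∈ Ioc 0 (1/2))] with x hx
    exact (hc.2.1 x hx.1.le hx.2.le).symm
  have hb' : Tendsto h (𝓝[>] (1/2:ℝ)) (𝓝 (1 - (1/2)*L)) := by
    have hφ : Tendsto (fun x => 2*μ*(1-x)) (𝓝[>] (1/2:ℝ)) (𝓝[<] μ) := by
      refine tendsto_side (continuous_const.mul (continuous_const.sub continuous_id)) ?_ (by simp only [id_eq, Pi.mul_apply, Pi.sub_apply]; ring)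
      intro x hx
      simp only [mem_Ioi, id_eq] at hx
      simp only [mem_Iio, id_eq, Pi.mul_apply, Pi.sub_apply]
      nlinarith
    have h1 : Tendsto (fun x => 1 - (1/2) * h (2*μ*(1-x))) (𝓝[>] (1/2:ℝ)) (𝓝 (1 - (1/2)*L)) :=
      tendsto_const_nhds.sub (tendsto_const_nhds.mul (hL.comp hφ))
    refine h1.congr' ?_
    filter_upwards [Ioo_mem_nhdsGT_of_mem (⟨le_refl _, by norm_num⟩ : (1/2:ℝ) ∈ Ico (1/2) 1)] with x hx
    exact (hc.2.2 x hx.1 hx.2.le).symm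
  have hab : (1/2)*L < 1 - (1/2)*L := by rw [hLdef]; linarith
  have haIco : Tendsto h (nhdsWithin (1/2 : ℝ) (Ico (0:ℝ) (1/2))) (𝓝 ((1/2)*L)) := by
    rw [nhdsWithin_Ico_eq_nhdsLT (by norm_num : (0:ℝ) < 1/2)]
    exact ha'
  have hbIoc : Tendsto h (nhdsWithin (1/2 : ℝ) (Ioc (1/2 : ℝ) 1)) (𝓝 (1 - (1/2)*L)) := by
    rw [nhdsWithin_Ioc_eq_nhdsGT (by norm_num : (1/2:ℝ) < 1)]
    exact hb'
  refine ⟨?_, (1/2)*L, 1 - (1/2)*L, haIco, hbIoc, hab⟩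
  intro hcont
  have t1 : Tendsto h (𝓝[<] (1/2:ℝ)) (𝓝 (h (1/2))) := by
    rw [← nhdsWithin_Ico_eq_nhdsLT (by norm_num : (0:ℝ) < 1/2)]
    exact hcont.mono_left (nhdsWithin_mono _ (fun x hx => ⟨hx.1, le_trans hx.2.le (by norm_num)⟩))
  have t2 : Tendsto h (𝓝[>] (1/2:ℝ)) (𝓝 (h (1/2))) := by
    rw [← nhdsWithin_Ioc_eq_nhdsGT (by norm_num : (1/2:ℝ) < 1)]
    exact hcont.mono_left (nhdsWithin_mono _ (fun x hx => ⟨le_trans (by norm_num) hx.1.le, hx.2⟩))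
  have e1 : (1/2)*L = h (1/2) := tendsto_nhds_unique ha' t1
  have e2 : 1 - (1/2)*L = h (1/2) := tendsto_nhds_unique hb' t2
  linarith
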